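/- Every extended nonnegative supermartingale M converges almost surely (in [0,∞]) to a random variable M_∞ taking values in [0,∞]. -/
import Mathlib


open MeasureTheory Filter
open scoped ENNReal NNReal

/-- Extended conditional expectation of a `[0,∞]`-valued random variable `X` given a
sub-σ-algebra `F`: the (increasing) limit of the classical conditional expectations of
the truncations `X ∧ n`. -/
noncomputable def extCondExp {Ω : Type*} {mΩ : MeasurableSpace Ω} (μ : Measure Ω)
    (F : MeasurableSpace Ω) (X : Ω → ℝ≥0∞) : Ω → ℝ≥0∞ :=
  fun ω => ⨆ n : ℕ, ENNReal.ofReal ((μ[fun ω' => (min (X ω') n).toReal | F]) ω)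

/-- Extended nonnegative supermartingale: a `[0,∞]`-valued adapted process with
`E[M_n | F_{n-1}] ≤ M_{n-1}` a.s. for all `n ≥ 1`, using the extended conditional
expectation. -/
def IsENSM {Ω : Type*} {mΩ : MeasurableSpace Ω} (μ : Measure Ω)
    (𝒢 : Filtration ℕ mΩ) (M : ℕ → Ω → ℝ≥0∞) : Prop :=
  (∀ n, Measurable[𝒢 n] (M n)) ∧
  ∀ n : ℕ, extCondExp μ (𝒢 n) (M (n + 1)) ≤ᵐ[μ] M n

/-- every extended nonnegative supermartingale converges almost surely
in `[0,∞]` to some limit. -/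
theorem isENSM_ae_tendsto
    {Ω : Type*} {mΩ : MeasurableSpace Ω} (μ : Measure Ω) [IsProbabilityMeasure μ]
    (𝒢 : Filtration ℕ mΩ) (M : ℕ → Ω → ℝ≥0∞) (hM : IsENSM μ 𝒢 M) :
    ∀ᵐ ω ∂μ, ∃ l : ℝ≥0∞, Tendsto (fun n => M n ω) atTop (nhds l) := by
  obtain ⟨hadp, hsup⟩ := hM
  -- the truncated processes
  set X : ℕ → ℕ → Ω → ℝ := fun c n ω => (min (M n ω) (c : ℝ≥0∞)).toReal with hX
  have hXmeas : ∀ c n, Measurable[𝒢 n] (X c n) := fun c n =>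
    ((hadp n).min measurable_const).ennreal_toReal
  have hXbd : ∀ c n ω, |X c n ω| ≤ (c : ℝ) := by
    intro c n ω
    rw [abs_of_nonneg ENNReal.toReal_nonneg]
    have h1 : min (M n ω) (c : ℝ≥0∞) ≤ (c : ℝ≥0∞) := min_le_right _ _
    calc X c n ω ≤ ((c : ℝ≥0∞)).toReal := ENNReal.toReal_mono (by simp) h1
      _ = (c : ℝ) := by simp
  have hXint : ∀ c n, Integrable (X c n) μ := by
    intro c n
    refine Integrable.mono' (integrable_const (c : ℝ))
      (((hXmeas c n).mono (𝒢.le n) le_rfl).aestronglyMeasurable) ?_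
    exact Filter.Eventually.of_forall fun ω => (hXbd c n ω).trans le_rfl
  -- each truncation is a supermartingale
  have hXsm : ∀ c : ℕ, Supermartingale (X c) 𝒢 μ := by
    intro c
    refine supermartingale_nat (fun n => (hXmeas c n).stronglyMeasurable) (hXint c) ?_
    intro n
    have h0 : 0 ≤ᵐ[μ] μ[X c (n + 1)|𝒢 n] :=
      condExp_nonneg (Filter.Eventually.of_forall fun ω => ENNReal.toReal_nonneg)
    have hc : μ[X c (n + 1)|𝒢 n] ≤ᵐ[μ] fun _ => (c : ℝ) := by
      have := condExp_mono (m := 𝒢 n) (μ := μ) (hXint c (n + 1))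
        (integrable_const (c : ℝ))
        (Filter.Eventually.of_forall fun ω => (abs_le.mp (hXbd c (n+1) ω)).2)
      rwa [condExp_const (𝒢.le n)] at this
    filter_upwards [h0, hc, hsup n] with ω h0ω hcω hsω
    -- key: ofReal (condexp) ≤ extCondExp ≤ M n ω
    have hle : ENNReal.ofReal ((μ[X c (n + 1)|𝒢 n]) ω) ≤ M n ω := by
      refine le_trans ?_ hsω
      exact le_iSup (fun k : ℕ =>
        ENNReal.ofReal ((μ[fun ω' => (min (M (n+1) ω') (k : ℝ≥0∞)).toReal | 𝒢 n]) ω)) c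
    have hle' : ENNReal.ofReal ((μ[X c (n + 1)|𝒢 n]) ω) ≤ min (M n ω) (c : ℝ≥0∞) := by
      refine le_min hle ?_
      calc ENNReal.ofReal ((μ[X c (n + 1)|𝒢 n]) ω) ≤ ENNReal.ofReal (c : ℝ) :=
            ENNReal.ofReal_le_ofReal hcω
        _ = (c : ℝ≥0∞) := by simp
    calc (μ[X c (n + 1)|𝒢 n]) ω = (ENNReal.ofReal ((μ[X c (n + 1)|𝒢 n]) ω)).toReal := by
          rw [ENNReal.toReal_ofReal h0ω]
      _ ≤ (min (M n ω) (c : ℝ≥0∞)).toReal := by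
          refine ENNReal.toReal_mono ?_ hle'
          exact ne_top_of_le_ne_top (by simp) (min_le_right _ _)
  -- each truncation converges a.s.
  have hconv : ∀ c : ℕ, ∀ᵐ ω ∂μ, ∃ l : ℝ, Tendsto (fun n => X c n ω) atTop (nhds l) := by
    intro c
    have hbdd : ∀ n, eLpNorm (X c n) 1 μ ≤ ((c : ℝ≥0) : ℝ≥0∞) := by
      intro n
      refine le_trans (eLpNorm_le_of_ae_bound (C := (c : ℝ))
        (Filter.Eventually.of_forall fun ω => by
          rw [Real.norm_eq_abs]; exact hXbd c n ω)) ?_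
      simp
    have := ((hXsm c).neg.exists_ae_tendsto_of_bdd (R := (c : ℝ≥0))
      (fun n => by simpa using hbdd n))
    filter_upwards [this] with ω ⟨l, hl⟩
    exact ⟨-l, by simpa using hl.neg⟩
  rw [← ae_all_iff] at hconv
  filter_upwards [hconv] with ω hω
  -- now deduce convergence of M itself
  by_cases hab : liminf (fun n => M n ω) atTop = limsup (fun n => M n ω) atTop
  · exact ⟨limsup (fun n => M n ω) atTop, tendsto_of_liminf_eq_limsup hab rfl⟩
  · have haltb : liminf (fun n => M n ω) atTop < limsup (fun n => M n ω) atTop :=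
      lt_of_le_of_ne (liminf_le_limsup) hab
    have hane : liminf (fun n => M n ω) atTop ≠ ⊤ := (haltb.trans_le le_top).ne
    obtain ⟨c, hc⟩ := ENNReal.exists_nat_gt hane
    obtain ⟨l, hl⟩ := hω c
    -- min (M n ω) c tends to ofReal l in ℝ≥0∞
    have hmin_ne : ∀ n, min (M n ω) (c : ℝ≥0∞) ≠ ⊤ := fun n =>
      ne_top_of_le_ne_top (by simp) (min_le_right _ _)
    have hmin_tendsto : Tendsto (fun n => min (M n ω) (c : ℝ≥0∞)) atTop
        (nhds (ENNReal.ofReal l)) := by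
      have : (fun n => min (M n ω) (c : ℝ≥0∞)) =
          fun n => ENNReal.ofReal (X c n ω) := by
        funext n; rw [hX]; exact (ENNReal.ofReal_toReal (hmin_ne n)).symm
      rw [this]
      exact (ENNReal.continuous_ofReal.tendsto l).comp hl
    rcases lt_or_ge (ENNReal.ofReal l) (c : ℝ≥0∞) with hlt | hge
    · -- eventually min < c, so M n ω = min eventually, so M converges
      have hev : ∀ᶠ n in atTop, min (M n ω) (c : ℝ≥0∞) < (c : ℝ≥0∞) :=
        hmin_tendsto.eventually_lt_const hlt
      have hev' : ∀ᶠ n in atTop, M n ω = min (M n ω) (c : ℝ≥0∞) := by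
        filter_upwards [hev] with n hn
        rcases min_cases (M n ω) ((c : ℝ≥0∞)) with ⟨h1, _⟩ | ⟨h1, h2⟩
        · exact h1.symm
        · exact absurd (h1 ▸ hn) (lt_irrefl _)
      exact ⟨ENNReal.ofReal l, hmin_tendsto.congr' (hev'.mono fun n h => h.symm)⟩
    · -- then limit of min is c, so c ≤ liminf M, contradiction
      exfalso
      have hlimc : Tendsto (fun n => min (M n ω) (c : ℝ≥0∞)) atTop (nhds (c : ℝ≥0∞)) := by
        have : ENNReal.ofReal l = (c : ℝ≥0∞) := by
          refine le_antisymm ?_ hge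
          have hlc : l ≤ (c : ℝ) := by
            refine le_of_tendsto hl (Filter.Eventually.of_forall fun n => ?_)
            have := hXbd c n ω
            exact (abs_le.mp this).2
          calc ENNReal.ofReal l ≤ ENNReal.ofReal (c : ℝ) := ENNReal.ofReal_le_ofReal hlc
            _ = (c : ℝ≥0∞) := by simp
        rwa [this] at hmin_tendsto
      have h1 : (c : ℝ≥0∞) = liminf (fun n => min (M n ω) (c : ℝ≥0∞)) atTop :=
        hlimc.liminf_eq.symm
      have h2 : liminf (fun n => min (M n ω) (c : ℝ≥0∞)) atTop ≤
          liminf (fun n => M n ω) atTop :=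
        liminf_le_liminf (Filter.Eventually.of_forall fun n => min_le_left _ _)
      exact absurd (h1 ▸ h2) (not_le.mpr hc)
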